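/- Let L be an algebraic lattice. Then L equipped with the coarse lower topology (whose subbasic closed sets are the principal up-sets ↑x = { y ∈ L : x ≤ y } for x ∈ L) is a spectral space. -/

import Mathlib

structure MonoidIdeal (M : Type*) [CommMonoid M] where
  carrier : Set M
  nonempty : carrier.Nonempty
  mul_mem : ∀ i ∈ carrier, ∀ m : M, i * m ∈ carrier

/-- The ideal generated by a subset `A` of a commutative monoid. -/
def genIdeal {M : Type*} [CommMonoid M] (A : Set M) : Set M :=
  {x | ∃ a ∈ A, ∃ m : M, x = a * m}

/-- The space of proper ideals of a commutative monoid. -/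
def ProperIdealSpace (M : Type*) [CommMonoid M] :=
  {I : MonoidIdeal M // I.carrier ≠ Set.univ}

/-- The coarse lower topology on the proper ideals: subbasic closed sets are
the sets `V J = {I proper : J ⊆ I}` for ideals `J`. -/
def lowerTopProper (M : Type*) [CommMonoid M] : TopologicalSpace (ProperIdealSpace M) :=
  .generateFrom {U | ∃ J : MonoidIdeal M, U = {I : ProperIdealSpace M | J.carrier ⊆ I.1.carrier}ᶜ}

/-- The coarse lower topology on all ideals. -/
def lowerTopAll (M : Type*) [CommMonoid M] : TopologicalSpace (MonoidIdeal M) :=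
  .generateFrom {U | ∃ J : MonoidIdeal M, U = {I : MonoidIdeal M | J.carrier ⊆ I.carrier}ᶜ}

/-- A spectral space: quasi-compact, sober, with a basis of quasi-compact
open sets closed under finite intersections. -/
def IsSpectral (X : Type*) [TopologicalSpace X] : Prop :=
  CompactSpace X ∧ QuasiSober X ∧ T0Space X ∧
    ∃ B : Set (Set X), TopologicalSpace.IsTopologicalBasis B ∧
      (∀ U ∈ B, IsCompact U ∧ IsOpen U) ∧ ∀ U ∈ B, ∀ V ∈ B, U ∩ V ∈ B

/-- An ideal is compact in the lattice of ideals if every cover by a sup of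
ideals admits a finite subcover. -/
def IsCompactIdeal {M : Type*} [CommMonoid M] (I : MonoidIdeal M) : Prop :=
  ∀ (Λ : Type) (y : Λ → MonoidIdeal M),
    I.carrier ⊆ genIdeal (⋃ l, (y l).carrier) →
    ∃ F : Finset Λ, I.carrier ⊆ genIdeal (⋃ l ∈ F, (y l).carrier)



open Topology TopologicalSpace Set

section Aux

variable {L : Type*} [CompleteLattice L] [TopologicalSpace L] [Topology.IsLower L]

/-- Any ultrafilter converges to the sup of the elements whose `Ici` lies in it. -/
lemma aux_ultra_le_nhds (f : Ultrafilter L) : ↑f ≤ 𝓝 (sSup {b : L | Set.Ici b ∈ f}) := by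
  set y := sSup {b : L | Set.Ici b ∈ f} with hy
  rw [le_nhds_iff]
  have H : ∀ s : Set L, TopologicalSpace.GenerateOpen {t | ∃ a : L, (Set.Ici a)ᶜ = t} s →
      y ∈ s → s ∈ f := by
    intro s hs
    induction hs with
    | basic u hu =>
      obtain ⟨a, rfl⟩ := hu
      intro hyu
      have hna : ¬ a ≤ y := hyu
      have : Set.Ici a ∉ f := fun h => hna (le_sSup h)
      exact (Ultrafilter.compl_mem_iff_notMem).mpr this
    | univ => exact fun _ => Filter.univ_mem
    | inter u v _ _ ihu ihv => exact fun hyu => Filter.inter_mem (ihu hyu.1) (ihv hyu.2)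
    | sUnion S _ ih =>
      rintro ⟨t, htS, hyt⟩
      exact Filter.mem_of_superset (ih t htS hyt) (Set.subset_sUnion_of_mem htS)
  intro s hys hs
  exact H s ((Topology.IsLower.isOpen_iff_generate_Ici_compl).mp hs) hys

lemma aux_isCompact_biInter (F : Finset L)
    (hF : ∀ c ∈ F, IsCompactElement c) :
    IsCompact (⋂ c ∈ F, (Set.Ici c)ᶜ) := by
  rw [isCompact_iff_ultrafilter_le_nhds]
  intro f hf
  rw [Filter.le_principal_iff] at hf
  refine ⟨sSup {b : L | Set.Ici b ∈ f}, ?_, aux_ultra_le_nhds f⟩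
  simp only [Set.mem_iInter, Set.mem_compl_iff, Set.mem_Ici]
  intro c hc hcy
  obtain ⟨t, htS, hct⟩ := (CompleteLattice.isCompactElement_iff_exists_le_sSup_of_le_sSup (k := c)).mp (hF c hc) _ hcy
  have h1 : Set.Ici (t.sup id) ∈ f := by
    have he : Set.Ici (t.sup id) = ⋂ b ∈ t, Set.Ici b := by
      ext z
      simp [Finset.sup_le_iff]
    rw [he]
    exact (Filter.biInter_finset_mem t).mpr fun b hb => htS hb
  have h2 : Set.Ici c ∈ f := Filter.mem_of_superset h1 fun z hz => le_trans hct hz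
  have h3 : (Set.Ici c)ᶜ ∈ f := Filter.mem_of_superset hf fun z hz => by
    simp only [Set.mem_iInter] at hz
    exact hz c hc
  exact (Ultrafilter.compl_mem_iff_notMem.mp h3) h2

lemma aux_exists_basic (halg : ∀ x : L, x = sSup {c | IsCompactElement c ∧ c ≤ x})
    (s : Set L) (hs : IsOpen s) :
    ∀ a ∈ s, ∃ F : Finset L, (∀ c ∈ F, IsCompactElement c) ∧
      a ∈ ⋂ c ∈ F, (Set.Ici c)ᶜ ∧ (⋂ c ∈ F, (Set.Ici c)ᶜ) ⊆ s := by
  classical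
  rw [Topology.IsLower.isOpen_iff_generate_Ici_compl] at hs
  induction hs with
  | basic u hu =>
    obtain ⟨x, rfl⟩ := hu
    intro a ha
    have hna : ¬ x ≤ a := ha
    have : ∃ c : L, IsCompactElement c ∧ c ≤ x ∧ ¬ c ≤ a := by
      by_contra h
      push_neg at h
      refine hna ?_
      conv_lhs => rw [halg x]
      exact sSup_le fun c hc => h c hc.1 hc.2
    obtain ⟨c, hc1, hc2, hc3⟩ := this
    refine ⟨{c}, by simpa using hc1, by simpa using hc3, ?_⟩
    intro z hz
    simp only [Finset.mem_singleton, Set.mem_iInter, Set.mem_compl_iff, Set.mem_Ici] at hz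
    exact fun hxz => (hz c rfl) (hc2.trans hxz)
  | univ =>
    intro a _
    exact ⟨∅, by simp, by simp, by simp⟩
  | inter u v _ _ ihu ihv =>
    intro a ha
    obtain ⟨F, hF1, hF2, hF3⟩ := ihu a ha.1
    obtain ⟨G, hG1, hG2, hG3⟩ := ihv a ha.2
    refine ⟨F ∪ G, ?_, ?_, ?_⟩
    · intro c hc
      rcases Finset.mem_union.mp hc with h | h
      exacts [hF1 c h, hG1 c h]
    · simp only [Set.mem_iInter] at hF2 hG2 ⊢
      intro c hc
      rcases Finset.mem_union.mp hc with h | h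
      exacts [hF2 c h, hG2 c h]
    · intro z hz
      simp only [Set.mem_iInter] at hz
      constructor
      · exact hF3 (Set.mem_iInter₂.mpr fun c hc => hz c (Finset.mem_union_left _ hc))
      · exact hG3 (Set.mem_iInter₂.mpr fun c hc => hz c (Finset.mem_union_right _ hc))
  | sUnion S _ ih =>
    rintro a ⟨t, htS, hat⟩
    obtain ⟨F, hF1, hF2, hF3⟩ := ih t htS a hat
    exact ⟨F, hF1, hF2, hF3.trans (Set.subset_sUnion_of_mem htS)⟩

lemma aux_irred_finset (S : Set L) (hS : IsPreirreducible S) (hne : S.Nonempty)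
    (F : Finset L) (h : S ⊆ ⋃ c ∈ F, Set.Ici c) : ∃ c ∈ F, S ⊆ Set.Ici c := by
  classical
  induction F using Finset.induction_on with
  | empty =>
    obtain ⟨x, hx⟩ := hne
    simpa using h hx
  | @insert a F hni ih =>
    rw [Finset.set_biUnion_insert] at h
    have hcl : IsClosed (⋃ c ∈ F, Set.Ici c) :=
      Set.Finite.isClosed_biUnion F.finite_toSet fun c _ => isClosed_Ici
    rcases isPreirreducible_iff_isClosed_union_isClosed.mp hS _ _ isClosed_Ici hcl h with h1 | h2
    · exact ⟨a, Finset.mem_insert_self a F, h1⟩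
    · obtain ⟨c, hc, hc2⟩ := ih h2
      exact ⟨c, Finset.mem_insert_of_mem hc, hc2⟩

end Aux


theorem stmt16 {L : Type*} [CompleteLattice L]
    (halg : ∀ x : L, x = sSup {c | IsCompactElement c ∧ c ≤ x}) :
    @IsSpectral L (.generateFrom {U | ∃ x : L, U = (Set.Ici x)ᶜ}) := by
  classical
  have hset : {U : Set L | ∃ x : L, U = (Set.Ici x)ᶜ} = {s : Set L | ∃ a : L, (Set.Ici a)ᶜ = s} := by
    ext U
    exact ⟨fun ⟨x, h⟩ => ⟨x, h.symm⟩, fun ⟨x, h⟩ => ⟨x, h.symm⟩⟩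
  rw [hset]
  letI : TopologicalSpace L := Topology.lower L
  haveI : Topology.IsLower L := ⟨rfl⟩
  show IsSpectral L
  have hBbasis : TopologicalSpace.IsTopologicalBasis
      {U : Set L | ∃ F : Finset L, (∀ c ∈ F, IsCompactElement c) ∧
        U = ⋂ c ∈ F, (Set.Ici c)ᶜ} := by
    refine TopologicalSpace.isTopologicalBasis_of_isOpen_of_nhds ?_ ?_
    · rintro U ⟨F, -, rfl⟩
      exact isOpen_biInter_finset fun c _ => isClosed_Ici.isOpen_compl
    · intro a u ha hu
      obtain ⟨F, hF1, hF2, hF3⟩ := aux_exists_basic halg u hu a ha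
      exact ⟨⋂ c ∈ F, (Set.Ici c)ᶜ, ⟨F, hF1, rfl⟩, hF2, hF3⟩
  refine ⟨?_, ?_, inferInstance, ?_⟩
  · refine ⟨?_⟩
    rw [isCompact_iff_ultrafilter_le_nhds]
    exact fun f _ => ⟨_, trivial, aux_ultra_le_nhds f⟩
  · refine ⟨fun {S} hS hScl => ?_⟩
    refine ⟨sInf S, ?_⟩
    have hmem : sInf S ∈ S := by
      by_contra hm
      obtain ⟨F, hF1, hF2, hF3⟩ := aux_exists_basic halg Sᶜ hScl.isOpen_compl (sInf S) hm
      have hsub : S ⊆ ⋃ c ∈ F, Set.Ici c := by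
        intro z hz
        by_contra hzz
        exact hF3 (Set.mem_iInter₂.mpr fun c hc hcz => hzz (Set.mem_biUnion hc hcz)) hz
      obtain ⟨c, hcF, hcS⟩ := aux_irred_finset S hS.2 hS.1 F hsub
      have : c ≤ sInf S := le_sInf fun z hz => hcS hz
      simp only [Set.mem_iInter, Set.mem_compl_iff, Set.mem_Ici] at hF2
      exact hF2 c hcF this
    rw [IsGenericPoint, Topology.IsLower.closure_singleton]
    apply Set.Subset.antisymm
    · exact fun z hz => (Topology.IsLower.isUpperSet_of_isClosed hScl) hz hmem
    · exact fun z hz => sInf_le hz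
  · refine ⟨_, hBbasis, ?_, ?_⟩
    · rintro U ⟨F, hF, rfl⟩
      exact ⟨aux_isCompact_biInter F hF, isOpen_biInter_finset fun c _ => isClosed_Ici.isOpen_compl⟩
    · rintro U ⟨F, hF, rfl⟩ V ⟨G, hG, rfl⟩
      refine ⟨F ∪ G, fun c hc => ?_, ?_⟩
      · rcases Finset.mem_union.mp hc with h | h
        exacts [hF c h, hG c h]
      · ext z
        simp only [Set.mem_inter_iff, Set.mem_iInter, Finset.mem_union]
        constructor
        · rintro ⟨h1, h2⟩ c hc
          rcases hc with h | h
          exacts [h1 c h, h2 c h]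
        · intro h
          exact ⟨fun c hc => h c (Or.inl hc), fun c hc => h c (Or.inr hc)⟩
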